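/- The group G = ℤⁿ ⋊ GL(n,ℤ) (with GL(n,ℤ) acting by matrix multiplication on ℤⁿ) is an ICC group for every n ≥ 2: every nontrivial element has an infinite conjugacy class. -/

import Mathlib

/-- The action of `GL(n,ℤ)` on `ℤⁿ` (written multiplicatively) by matrix
multiplication, as a homomorphism to the automorphism group. -/
def glAction (n : ℕ) : GL (Fin n) ℤ →* MulAut (Multiplicative (Fin n → ℤ)) where
  toFun g :=
    { toFun := fun v => Multiplicative.ofAdd
        ((g : Matrix (Fin n) (Fin n) ℤ).mulVec v.toAdd)
      invFun := fun v => Multiplicative.ofAdd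
        (((g⁻¹ : GL (Fin n) ℤ) : Matrix (Fin n) (Fin n) ℤ).mulVec v.toAdd)
      left_inv := by
        intro v
        simp [Matrix.mulVec_mulVec, ← Units.val_mul]
      right_inv := by
        intro v
        simp [Matrix.mulVec_mulVec, ← Units.val_mul]
      map_mul' := by
        intro v w
        simp [Matrix.mulVec_add, ofAdd_add] }
  map_one' := by
    ext v
    simp
  map_mul' := by
    intro g h
    refine MulEquiv.ext fun v => ?_
    show Multiplicative.ofAdd
        ((((g * h : GL (Fin n) ℤ)) : Matrix (Fin n) (Fin n) ℤ).mulVec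
          (Multiplicative.toAdd v)) =
      Multiplicative.ofAdd
        (((g : GL (Fin n) ℤ) : Matrix (Fin n) (Fin n) ℤ).mulVec
          (((h : GL (Fin n) ℤ) : Matrix (Fin n) (Fin n) ℤ).mulVec
            (Multiplicative.toAdd v)))
    rw [Units.val_mul, ← Matrix.mulVec_mulVec]


lemma glAction_apply {n : ℕ} (g : GL (Fin n) ℤ) (a : Multiplicative (Fin n → ℤ)) :
    (glAction n g) a
      = Multiplicative.ofAdd ((g : Matrix (Fin n) (Fin n) ℤ).mulVec a.toAdd) := rfl

open Matrix in
theorem icc_semidirect {n : ℕ} (hn : 2 ≤ n)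
    (x : Multiplicative (Fin n → ℤ) ⋊[glAction n] GL (Fin n) ℤ) (hx : x ≠ 1) :
    (Set.range fun h : Multiplicative (Fin n → ℤ) ⋊[glAction n] GL (Fin n) ℤ =>
      h * x * h⁻¹).Infinite := by
  set v : Fin n → ℤ := Multiplicative.toAdd x.left with hv
  set g : GL (Fin n) ℤ := x.right with hg
  have hxl : x.left = Multiplicative.ofAdd v := rfl
  by_cases hg1 : g = 1
  · -- translation part nontrivial
    have hv0 : v ≠ 0 := by
      intro h
      apply hx
      apply SemidirectProduct.ext
      · show x.left = 1
        rw [hxl, h]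
        rfl
      · simpa using hg1
    obtain ⟨i, hi⟩ : ∃ i, v i ≠ 0 := by
      by_contra h
      push_neg at h
      exact hv0 (funext h)
    have : Nontrivial (Fin n) := Fin.nontrivial_iff_two_le.mpr hn
    obtain ⟨j, hij⟩ : ∃ j : Fin n, j ≠ i := exists_ne i
    set E : Matrix (Fin n) (Fin n) ℤ := Matrix.single j i 1 with hE
    have hEE : ∀ t : ℤ, (t • E) * (t • E) = 0 := by
      intro t
      rw [Matrix.smul_mul, Matrix.mul_smul, hE,
        Matrix.single_mul_single_of_ne (h := fun h : i = j => hij h.symm)]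
      simp
    have hmul : ∀ t : ℤ, (1 + t • E) * (1 - t • E) = 1 := by
      intro t
      rw [add_mul, one_mul, mul_sub, mul_one, hEE]
      abel
    have hmul' : ∀ t : ℤ, (1 - t • E) * (1 + t • E) = 1 := by
      intro t
      rw [sub_mul, one_mul, mul_add, mul_one, hEE]
      abel
    set k : ℤ → GL (Fin n) ℤ := fun t => ⟨1 + t • E, 1 - t • E, hmul t, hmul' t⟩ with hk
    set f : ℤ → Multiplicative (Fin n → ℤ) ⋊[glAction n] GL (Fin n) ℤ :=
      fun t => ⟨Multiplicative.ofAdd ((1 + t • E).mulVec v), 1⟩ with hf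
    apply Set.infinite_of_injective_forall_mem (f := f)
    · intro t₁ t₂ h
      have h1 : (1 + t₁ • E).mulVec v = (1 + t₂ • E).mulVec v :=
        congrArg Multiplicative.toAdd (congrArg SemidirectProduct.left h)
      have h2 := congrFun h1 j
      simp only [Matrix.add_mulVec, Matrix.one_mulVec, Matrix.smul_mulVec, hE,
        Matrix.single_mulVec, one_mul, Pi.add_apply, Pi.smul_apply,
        Function.update_self, smul_eq_mul] at h2
      exact mul_right_cancel₀ hi (add_left_cancel h2)
    · intro t
      refine ⟨⟨1, k t⟩, ?_⟩
      show (⟨1, k t⟩ * x * (⟨1, k t⟩ : _ ⋊[glAction n] _)⁻¹ : _) = f t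
      apply SemidirectProduct.ext
      · simp only [SemidirectProduct.mul_left, SemidirectProduct.mul_right,
          SemidirectProduct.inv_left, SemidirectProduct.inv_right, inv_one,
          _root_.map_one, mul_one, one_mul, glAction_apply]
        rfl
      · simp only [SemidirectProduct.mul_right, SemidirectProduct.inv_right]
        rw [← hg, hg1]
        group
        rfl
  · -- matrix part nontrivial
    have hgm : (g : Matrix (Fin n) (Fin n) ℤ) ≠ 1 := fun h => hg1 (Units.ext h)
    obtain ⟨u, hu⟩ : ∃ u : Fin n → ℤ, (g : Matrix (Fin n) (Fin n) ℤ).mulVec u ≠ u := by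
      by_contra h
      push_neg at h
      apply hgm
      ext a b
      have := congrFun (h (Pi.single b 1)) a
      rw [Matrix.mulVec_single_one] at this
      simp only [Matrix.col_apply] at this
      rw [this]
      by_cases hab : a = b
      · subst hab; simp
      · simp [Pi.single_apply, hab, Matrix.one_apply_ne hab]
    set d : Fin n → ℤ := u - (g : Matrix (Fin n) (Fin n) ℤ).mulVec u with hd
    have hd0 : d ≠ 0 := fun h => hu (sub_eq_zero.mp h).symm
    obtain ⟨i, hi⟩ : ∃ i, d i ≠ 0 := by
      by_contra h; push_neg at h; exact hd0 (funext h)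
    set f : ℤ → Multiplicative (Fin n → ℤ) ⋊[glAction n] GL (Fin n) ℤ :=
      fun t => ⟨Multiplicative.ofAdd (t • d + v), g⟩ with hf
    apply Set.infinite_of_injective_forall_mem (f := f)
    · intro t₁ t₂ h
      have h1 : t₁ • d + v = t₂ • d + v :=
        congrArg Multiplicative.toAdd (congrArg SemidirectProduct.left h)
      have h2 := congrFun (add_right_cancel h1) i
      simp only [Pi.smul_apply, smul_eq_mul] at h2
      exact mul_right_cancel₀ hi h2
    · intro t
      refine ⟨⟨Multiplicative.ofAdd (t • u), 1⟩, ?_⟩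
      show (⟨Multiplicative.ofAdd (t • u), 1⟩ * x *
        (⟨Multiplicative.ofAdd (t • u), 1⟩ : _ ⋊[glAction n] _)⁻¹ : _) = f t
      apply SemidirectProduct.ext
      · simp only [SemidirectProduct.mul_left, SemidirectProduct.mul_right,
          SemidirectProduct.inv_left, SemidirectProduct.inv_right, inv_one,
          _root_.map_one, MulAut.one_apply, one_mul, glAction_apply, hxl, ← hg]
        show Multiplicative.ofAdd (t • u) * Multiplicative.ofAdd v *
          Multiplicative.ofAdd ((g : Matrix (Fin n) (Fin n) ℤ).mulVec
            (Multiplicative.toAdd (Multiplicative.ofAdd (t • u))⁻¹))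
          = Multiplicative.ofAdd (t • d + v)
        rw [show Multiplicative.toAdd (Multiplicative.ofAdd (t • u))⁻¹ = -(t • u) from rfl,
          ← ofAdd_add, ← ofAdd_add]
        congr 1
        rw [Matrix.mulVec_neg, Matrix.mulVec_smul, hd]
        simp only [smul_sub]
        abel
      · simp only [SemidirectProduct.mul_right, SemidirectProduct.inv_right,
          mul_one, one_mul, inv_one, hf, ← hg]
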